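/- Let w' satisfy r/2 ≤ F_0/2^{w'} ≤ r, let θ = r/(r-1) with r ≥ 101, and 0 < ε < 0.1. Then (1+ε)·H(l-1) < (1-ε)·(r·f/(2F_0))·e^{-θ}, where H(l-1) = (f/2^{l-1})·θ·exp(-F_0/(r·2^{l-1})) and l satisfies 2r < F_0/2^l ≤ 4r. -/

import Mathlib

lemma exp_four_gt : (54:ℝ) < Real.exp 4 := by
  have h4' : Real.exp (4:ℝ) = Real.exp 1 * Real.exp 1 * (Real.exp 1 * Real.exp 1) := by
    rw [show (4:ℝ) = 1 + 1 + (1 + 1) by norm_num, Real.exp_add, Real.exp_add]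
  have he : (2.7182818283:ℝ) < Real.exp 1 := Real.exp_one_gt_d9
  have he2 : (7.389:ℝ) < Real.exp 1 * Real.exp 1 := by nlinarith
  nlinarith

lemma exp_le_bound {θ : ℝ} (hθ2 : θ ≤ 1.01) : Real.exp θ < 2.75 := by
  have ha : (0.99:ℝ) ≤ Real.exp (-0.01) := by
    linarith [Real.add_one_le_exp (-0.01 : ℝ)]
  have hb : Real.exp (0.01:ℝ) ≤ 1 / 0.99 := by
    rw [le_div_iff₀ (by norm_num : (0:ℝ) < 0.99)]
    have : Real.exp (0.01:ℝ) * Real.exp (-0.01:ℝ) = 1 := by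
      rw [← Real.exp_add]; norm_num
    nlinarith [Real.exp_pos (0.01:ℝ)]
  have hc : Real.exp θ ≤ Real.exp 1 * Real.exp 0.01 := by
    rw [← Real.exp_add]
    exact Real.exp_le_exp.mpr (by linarith)
  nlinarith [Real.exp_one_lt_d9, Real.exp_pos (0.01:ℝ), Real.exp_pos 1]

lemma texp_le {t : ℝ} (ht4 : 4 < t) : t * Real.exp (-t) ≤ 4 * Real.exp (-4) := by
  have h1' : t - 3 ≤ Real.exp (t - 4) := by
    linarith [Real.add_one_le_exp (t - 4)]
  have h2' : Real.exp (-t) * Real.exp (t - 4) = Real.exp (-4 : ℝ) := by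
    rw [← Real.exp_add]; congr 1; ring
  nlinarith [Real.exp_pos (-t), Real.exp_pos (t - 4),
    mul_le_mul_of_nonneg_left h1' (Real.exp_pos (-t)).le]

set_option maxHeartbeats 1000000 in
/-- Claim 3: with `r ≥ 101`, `θ = r/(r-1)`, `0 < ε < 0.1`, `2r < F₀/2^l ≤ 4r`
and `r/2 ≤ F₀/2^{w'} ≤ r`, we have
`(1+ε)·H(l-1) < (1-ε)·(r·f/(2F₀))·e^{-θ}`. -/
theorem stmt_10 (r θ ε f F0 : ℝ) (hr : 101 ≤ r) (hθ : θ = r / (r - 1))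
    (hε0 : 0 < ε) (hε1 : ε < 0.1) (hf : 0 < f) (hF0 : 0 < F0)
    (l w' : ℕ) (hl : 1 ≤ l)
    (h1 : 2 * r < F0 / 2 ^ l) (h2 : F0 / 2 ^ l ≤ 4 * r)
    (h3 : r / 2 ≤ F0 / 2 ^ w') (h4 : F0 / 2 ^ w' ≤ r) :
    (1 + ε) * (f / 2 ^ (l - 1) * θ * Real.exp (-(F0 / (r * 2 ^ (l - 1))))) <
      (1 - ε) * (r * f / (2 * F0)) * Real.exp (-θ) := by
  have hr0 : (0:ℝ) < r := by linarith
  have hrm : (0:ℝ) < r - 1 := by linarith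
  have hθ1 : 1 < θ := by
    rw [hθ, lt_div_iff₀ hrm]; linarith
  have hθ2 : θ ≤ 1.01 := by
    rw [hθ, div_le_iff₀ hrm]; nlinarith
  have hp : (0:ℝ) < (2:ℝ) ^ (l - 1) := by positivity
  obtain ⟨t, ht⟩ : ∃ t : ℝ, t = F0 / (r * 2 ^ (l - 1)) := ⟨_, rfl⟩
  rw [show (-(F0 / (r * 2 ^ (l - 1)))) = -t by rw [ht]]
  have hpl : (2:ℝ) ^ l = 2 ^ (l - 1) * 2 := by
    rw [← pow_succ, Nat.sub_add_cancel hl]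
  have ht4 : 4 < t := by
    rw [ht, lt_div_iff₀ (by positivity)]
    rw [hpl, lt_div_iff₀ (by positivity)] at h1
    nlinarith
  have hkey : t * Real.exp (-t) ≤ 4 * Real.exp (-4) := texp_le ht4
  have hexpθ : Real.exp θ < 2.75 := exp_le_bound hθ2
  have hexp4 : (54:ℝ) < Real.exp 4 := exp_four_gt
  have e4 : Real.exp (-4:ℝ) < 1 / 54 := by
    have hm : Real.exp (-4:ℝ) * Real.exp 4 = 1 := by rw [← Real.exp_add]; norm_num
    nlinarith [Real.exp_pos (-4:ℝ),
      mul_pos (Real.exp_pos (-4:ℝ)) (by linarith : (0:ℝ) < Real.exp 4 - 54)]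
  have eθ : (1:ℝ) / 2.75 < Real.exp (-θ) := by
    have hm : Real.exp (-θ) * Real.exp θ = 1 := by rw [← Real.exp_add]; simp
    nlinarith [Real.exp_pos (-θ),
      mul_pos (Real.exp_pos (-θ)) (by linarith : (0:ℝ) < 2.75 - Real.exp θ)]
  -- core scalar inequality
  have key2 : (1 + ε) * θ * (t * Real.exp (-t)) < (1 - ε) / 2 * Real.exp (-θ) := by
    have hA : t * Real.exp (-t) < 4 * (1/54) := by linarith [hkey, e4]
    have hab : (1 + ε) * θ < 1.1 * 1.01 := by
      have hθ0 : (0:ℝ) < θ := by linarith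
      have hx := mul_lt_mul_of_pos_right (show (1:ℝ) + ε < 1.1 by linarith) hθ0
      have hy := mul_le_mul_of_nonneg_left hθ2 (by norm_num : (0:ℝ) ≤ 1.1)
      linarith
    have hL : (1 + ε) * θ * (t * Real.exp (-t)) < 1.1 * 1.01 * (4 * (1/54)) :=
      mul_lt_mul'' hab hA (by nlinarith) (mul_nonneg (by linarith) (Real.exp_pos _).le)
    have hR : (0.45:ℝ) * (1/2.75) < (1 - ε) / 2 * Real.exp (-θ) :=
      mul_lt_mul'' (by linarith) eθ (by norm_num) (by norm_num)
    calc (1 + ε) * θ * (t * Real.exp (-t)) < 1.1 * 1.01 * (4 * (1/54)) := hL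
      _ ≤ (0.45:ℝ) * (1/2.75) := by norm_num
      _ < (1 - ε) / 2 * Real.exp (-θ) := hR
  -- assemble
  have hF : f / 2 ^ (l - 1) = t * r * f / F0 := by
    rw [ht]; field_simp
  have hc : (0:ℝ) < r * f / F0 := by positivity
  calc (1 + ε) * (f / 2 ^ (l - 1) * θ * Real.exp (-t))
      = ((1 + ε) * θ * (t * Real.exp (-t))) * (r * f / F0) := by rw [hF]; ring
    _ < ((1 - ε) / 2 * Real.exp (-θ)) * (r * f / F0) :=
        mul_lt_mul_of_pos_right key2 hc
    _ = (1 - ε) * (r * f / (2 * F0)) * Real.exp (-θ) := by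
        field_simp
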